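/- Let X be a finite set and let 0 < m ≤ 1/|X|. Then there exists a constant C > 0 (one may take C = 1/(2m)) such that for all probability distributions q, p, p' in the restricted simplex Δ̊_m(X), D(p‖p') ≤ C·(D(q‖p) + D(q‖p')). -/

import Mathlib

open Finset

/-- A probability distribution on a finite type: nonnegative and sums to 1. -/
def IsProb {X : Type*} [Fintype X] (p : X → ℝ) : Prop :=
  (∀ x, 0 ≤ p x) ∧ ∑ x, p x = 1

/-- Kullback–Leibler divergence between distributions on a finite type. -/
noncomputable def klDiv {X : Type*} [Fintype X] (q p : X → ℝ) : ℝ :=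
  ∑ x, q x * Real.log (q x / p x)

open Real Set in

lemma key (b a : ℝ) (hb : 0 < b) (hb1 : b ≤ 1) (ha : 0 < a) (ha1 : a ≤ 1) :
    (a - b) ^ 2 / 2 ≤ a * Real.log (a / b) - a + b := by
  set f : ℝ → ℝ := fun x => x * (Real.log x - Real.log b) - x + b - (x - b) ^ 2 / 2 with hf
  have hfb : f b = 0 := by simp [hf]
  have hderiv : ∀ x : ℝ, 0 < x →
      HasDerivAt f (Real.log x - Real.log b - (x - b)) x := by
    intro x hx
    have h1 : HasDerivAt (fun y : ℝ => y * (Real.log y - Real.log b))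
        (1 * (Real.log x - Real.log b) + x * x⁻¹) x :=
      (hasDerivAt_id x).mul ((Real.hasDerivAt_log hx.ne').sub_const _)
    have h2 : HasDerivAt (fun y : ℝ => (y - b) ^ 2 / 2) ((x - b) * 1) x := by
      have := (((hasDerivAt_id x).sub_const b).pow 2).div_const 2
      simpa using this
    have h3 := ((h1.sub (hasDerivAt_id x)).add_const b).sub h2
    convert h3 using 1
    · rfl
    · rfl
    · rfl
    · rw [mul_inv_cancel₀ hx.ne']; ring
  have hgoal : 0 ≤ f a := by
    rcases le_total a b with hab | hab
    · -- f antitone on [a, b]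
      have hanti : AntitoneOn f (Icc a b) := by
        apply antitoneOn_of_deriv_nonpos (convex_Icc a b)
        · intro x hx
          exact (hderiv x (lt_of_lt_of_le ha hx.1)).continuousAt.continuousWithinAt
        · intro x hx
          rw [interior_Icc] at hx
          exact (hderiv x (ha.trans hx.1)).differentiableAt.differentiableWithinAt
        · intro x hx
          rw [interior_Icc] at hx
          have hx0 : 0 < x := ha.trans hx.1
          rw [(hderiv x hx0).deriv]
          have hlog : Real.log (x / b) ≤ x / b - 1 :=
            Real.log_le_sub_one_of_pos (by positivity)
          rw [Real.log_div hx0.ne' hb.ne'] at hlog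
          have hxb : x < b := hx.2
          have hll : Real.log x < Real.log b := Real.log_lt_log hx0 hxb
          have := mul_le_mul_of_nonneg_left hlog hb.le
          have heq : b * (x / b - 1) = x - b := by field_simp
          rw [heq] at this
          nlinarith
      have := hanti ⟨le_refl a, hab⟩ ⟨hab, le_refl b⟩ hab
      rw [hfb] at this
      exact this
    · -- f monotone on [b, a]
      have hmono : MonotoneOn f (Icc b a) := by
        apply monotoneOn_of_deriv_nonneg (convex_Icc b a)
        · intro x hx
          exact (hderiv x (lt_of_lt_of_le hb hx.1)).continuousAt.continuousWithinAt
        · intro x hx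
          rw [interior_Icc] at hx
          exact (hderiv x (hb.trans hx.1)).differentiableAt.differentiableWithinAt
        · intro x hx
          rw [interior_Icc] at hx
          have hx0 : 0 < x := hb.trans hx.1
          rw [(hderiv x hx0).deriv]
          have hlog : Real.log (b / x) ≤ b / x - 1 :=
            Real.log_le_sub_one_of_pos (by positivity)
          rw [Real.log_div hb.ne' hx0.ne'] at hlog
          have hxa : x < a := hx.2
          have hx1 : x ≤ 1 := hxa.le.trans ha1
          have hll : Real.log b ≤ Real.log x := Real.log_le_log hb hx.1.le
          have := mul_le_mul_of_nonneg_left hlog hx0.le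
          have heq : x * (b / x - 1) = b - x := by field_simp
          rw [heq] at this
          nlinarith
      have := hmono ⟨le_refl b, hab⟩ ⟨hab, le_refl a⟩ hab
      rw [hfb] at this
      exact this
  have : f a = a * Real.log (a / b) - a + b - (a - b) ^ 2 / 2 := by
    rw [hf, Real.log_div ha.ne' hb.ne']
  linarith [hgoal, this ▸ hgoal]

lemma key_ub (m a b : ℝ) (hm : 0 < m) (ha : 0 < a) (hb : m ≤ b) :
    a * Real.log (a / b) - a + b ≤ (a - b) ^ 2 / m := by
  have hb0 : 0 < b := hm.trans_le hb
  have hlog : Real.log (a / b) ≤ a / b - 1 :=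
    Real.log_le_sub_one_of_pos (by positivity)
  have h1 := mul_le_mul_of_nonneg_left hlog ha.le
  have h2 : a * (a / b - 1) - a + b = (a - b) ^ 2 / b := by
    field_simp
    ring
  have h3 : (a - b) ^ 2 / b ≤ (a - b) ^ 2 / m :=
    div_le_div_of_nonneg_left (sq_nonneg _) hm hb
  linarith

/-- a pseudo triangle inequality for KL divergence on the
restricted simplex `Δ̊_m(X)`: there is `C > 0` with
`D(p‖p') ≤ C·(D(q‖p) + D(q‖p'))` for all `q, p, p' ∈ Δ̊_m(X)`. -/
theorem stmt2 {X : Type*} [Fintype X] (hX : 2 ≤ Fintype.card X)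
    (m : ℝ) (hm : 0 < m) (hm' : m ≤ 1 / (Fintype.card X : ℝ)) :
    ∃ C : ℝ, 0 < C ∧
      ∀ q p p' : X → ℝ,
        IsProb q → (∀ x, m ≤ q x) →
        IsProb p → (∀ x, m ≤ p x) →
        IsProb p' → (∀ x, m ≤ p' x) →
        klDiv p p' ≤ C * (klDiv q p + klDiv q p') := by
  refine ⟨4 / m, by positivity, fun q p p' hq hqm hp hpm hp' hpm' => ?_⟩
  have hle1 : ∀ (r : X → ℝ), IsProb r → ∀ x, r x ≤ 1 := by
    intro r hr x
    calc r x ≤ ∑ y, r y := Finset.single_le_sum (fun i _ => hr.1 i) (Finset.mem_univ x)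
    _ = 1 := hr.2
  have hqpos : ∀ x, 0 < q x := fun x => hm.trans_le (hqm x)
  have hppos : ∀ x, 0 < p x := fun x => hm.trans_le (hpm x)
  have hp'pos : ∀ x, 0 < p' x := fun x => hm.trans_le (hpm' x)
  -- the sums ∑ (A x - q x + r x) equal ∑ A x
  have hsumeq : ∀ (u v : X → ℝ) (A : X → ℝ), IsProb u → IsProb v →
      ∑ x, (A x - u x + v x) = ∑ x, A x := by
    intro u v A hu hv
    rw [Finset.sum_add_distrib, Finset.sum_sub_distrib, hu.2, hv.2]
    ring
  -- lower bounds (Pinsker-type)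
  have h1 : ∑ x, (q x - p x) ^ 2 / 2 ≤ klDiv q p := by
    have := Finset.sum_le_sum (s := Finset.univ) (f := fun x => (q x - p x) ^ 2 / 2)
      (g := fun x => q x * Real.log (q x / p x) - q x + p x)
      (fun x _ => key (p x) (q x) (hppos x) (hle1 p hp x) (hqpos x) (hle1 q hq x))
    rwa [hsumeq q p _ hq hp] at this
  have h2 : ∑ x, (q x - p' x) ^ 2 / 2 ≤ klDiv q p' := by
    have := Finset.sum_le_sum (s := Finset.univ) (f := fun x => (q x - p' x) ^ 2 / 2)
      (g := fun x => q x * Real.log (q x / p' x) - q x + p' x)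
      (fun x _ => key (p' x) (q x) (hp'pos x) (hle1 p' hp' x) (hqpos x) (hle1 q hq x))
    rwa [hsumeq q p' _ hq hp'] at this
  -- upper bound (chi-squared type)
  have hub : klDiv p p' ≤ ∑ x, (p x - p' x) ^ 2 / m := by
    have heq := (hsumeq p p' (fun x => p x * Real.log (p x / p' x)) hp hp').symm
    rw [klDiv, heq]
    exact Finset.sum_le_sum
      (fun x _ => key_ub m (p x) (p' x) hm (hppos x) (hpm' x))
  have hstep : ∑ x, (p x - p' x) ^ 2
      ≤ 2 * ∑ x, (q x - p x) ^ 2 + 2 * ∑ x, (q x - p' x) ^ 2 := by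
    rw [Finset.mul_sum, Finset.mul_sum, ← Finset.sum_add_distrib]
    exact Finset.sum_le_sum (fun x _ => by nlinarith [sq_nonneg (2 * q x - p x - p' x)])
  rw [← Finset.sum_div] at h1 h2 hub
  have hnum : 0 ≤ 4 * (klDiv q p + klDiv q p') - ∑ x, (p x - p' x) ^ 2 := by linarith
  have heq : (4 * (klDiv q p + klDiv q p') - ∑ x, (p x - p' x) ^ 2) / m
      = 4 / m * (klDiv q p + klDiv q p') - (∑ x, (p x - p' x) ^ 2) / m := by ring
  have := div_nonneg hnum hm.le
  rw [heq] at this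
  linarith
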